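/- Let R be a finite nontrivial commutative ring, let (x_1, y_1), …, (x_n, y_n) ∈ R², let e be a positive integer, and let S be a finite set of pairs of natural numbers with |S| > n·e·(e+1)/2. Then there exists a nonzero bivariate polynomial Q over R, all of whose monomials X^i Y^j satisfy (i, j) ∈ S, such that for every 1 ≤ i ≤ n, every coefficient of X^a Y^b with a + b < e in the shifted polynomial Q(X + x_i, Y + y_i) vanishes. -/

import Mathlib

open Polynomial

/-- The bivariate polynomial `Q(X + α, Y + c)`, where a bivariate polynomial
is represented as `Q : Polynomial (Polynomial R)` with outer variable `Y` and
coefficients in `R[X]`. -/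
noncomputable def bivShift {R : Type*} [CommRing R] (α c : R)
    (Q : Polynomial (Polynomial R)) : Polynomial (Polynomial R) :=
  (Q.map (Polynomial.aeval (X + C α) : R[X] →ₐ[R] R[X]).toRingHom).comp
    (X + C (C c))

theorem bivShift_sub {R : Type*} [CommRing R] (α c : R)
    (Q Q' : Polynomial (Polynomial R)) :
    bivShift α c (Q - Q') = bivShift α c Q - bivShift α c Q' := by
  simp [bivShift, Polynomial.map_sub, Polynomial.sub_comp]

/-- Existence of a nonzero interpolation polynomial with prescribed monomial
support `S` vanishing with multiplicity `e` at `n` given points, provided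
`|S| > n·e·(e+1)/2`. -/
theorem exists_interpolation_polynomial
    {R : Type*} [CommRing R] [Fintype R] [Nontrivial R]
    (n : ℕ) (x y : Fin n → R) (e : ℕ) (he : 0 < e)
    (S : Finset (ℕ × ℕ)) (hS : n * e * (e + 1) / 2 < S.card) :
    ∃ Q : Polynomial (Polynomial R), Q ≠ 0 ∧
      (∀ i j : ℕ, (Q.coeff j).coeff i ≠ 0 → (i, j) ∈ S) ∧
      (∀ l : Fin n, ∀ a b : ℕ, a + b < e →
        ((bivShift (x l) (y l) Q).coeff b).coeff a = 0) := by
  classical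
  -- the set of vanishing conditions at a single point
  set T : Finset (ℕ × ℕ) := (Finset.range e).biUnion
    (fun k => Finset.HasAntidiagonal.antidiagonal k) with hTdef
  have hTmem : ∀ a b : ℕ, a + b < e → (a, b) ∈ T := by
    intro a b hab
    rw [hTdef, Finset.mem_biUnion]
    exact ⟨a + b, Finset.mem_range.2 hab, Finset.HasAntidiagonal.mem_antidiagonal.2 rfl⟩
  have hsum : ∀ m : ℕ, (∑ k ∈ Finset.range m, (k + 1)) * 2 = m * (m + 1) := by
    intro m
    induction m with
    | zero => simp
    | succ p ih => rw [Finset.sum_range_succ, add_mul, ih]; ring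
  have hTcard2 : T.card * 2 = e * (e + 1) := by
    rw [hTdef, Finset.card_biUnion]
    · simp only [Finset.Nat.card_antidiagonal]
      exact hsum e
    · intro i _ j _ hij
      rw [Function.onFun, Finset.disjoint_left]
      intro p hp hq
      exact hij ((Finset.HasAntidiagonal.mem_antidiagonal.1 hp).symm.trans
        (Finset.HasAntidiagonal.mem_antidiagonal.1 hq))
  -- the polynomial associated to a coefficient vector
  set P : ({s // s ∈ S} → R) → Polynomial (Polynomial R) := fun f =>
    ∑ s : {s // s ∈ S},
      Polynomial.monomial s.1.2 (Polynomial.monomial s.1.1 (f s)) with hPdef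
  have hcoeff : ∀ (f : {s // s ∈ S} → R) (i j : ℕ),
      ((P f).coeff j).coeff i = if hij : (i, j) ∈ S then f ⟨(i, j), hij⟩ else 0 := by
    intro f i j
    have h1 : ((P f).coeff j).coeff i
        = ∑ s : {s // s ∈ S}, if s.1 = (i, j) then f s else 0 := by
      rw [hPdef]
      simp only [Polynomial.finset_sum_coeff, Polynomial.coeff_monomial,
        apply_ite (fun p : Polynomial R => p.coeff i), Polynomial.coeff_zero]
      refine Finset.sum_congr rfl fun s _ => ?_
      obtain ⟨⟨a, b⟩, hs⟩ := s
      by_cases h1 : b = j <;> by_cases h2 : a = i <;>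
        simp [h1, h2, Prod.ext_iff, @eq_comm _ i, @eq_comm _ j]
    rw [h1]
    split
    · rename_i hij
      rw [Finset.sum_eq_single (⟨(i, j), hij⟩ : {s // s ∈ S})]
      · simp
      · intro b _ hb
        rw [if_neg]
        exact fun hc => hb (Subtype.ext hc)
      · intro hmem; exact absurd (Finset.mem_univ _) hmem
    · rename_i hij
      refine Finset.sum_eq_zero fun s _ => ?_
      rw [if_neg]
      exact fun hc => hij (hc ▸ s.2)
  have hPsub : ∀ f g, P (f - g) = P f - P g := by
    intro f g
    simp only [hPdef, Pi.sub_apply, map_sub, Finset.sum_sub_distrib]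
  -- the condition map
  set φ : ({s // s ∈ S} → R) → (Fin n × {p // p ∈ T} → R) := fun f q =>
    ((bivShift (x q.1) (y q.1) (P f)).coeff q.2.1.2).coeff q.2.1.1 with hφdef
  have hlt : Fintype.card (Fin n × {p // p ∈ T} → R)
      < Fintype.card ({s // s ∈ S} → R) := by
    rw [Fintype.card_fun, Fintype.card_fun]
    apply Nat.pow_lt_pow_right Fintype.one_lt_card
    rw [Fintype.card_prod, Fintype.card_coe, Fintype.card_coe, Fintype.card_fin]
    have h2 : n * e * (e + 1) = (n * T.card) * 2 := by
      rw [mul_assoc, ← hTcard2]; ring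
    have h3 : n * e * (e + 1) / 2 = n * T.card := by
      rw [h2, Nat.mul_div_cancel _ two_pos]
    omega
  obtain ⟨f, g, hfg, heq⟩ := Fintype.exists_ne_map_eq_of_card_lt φ hlt
  refine ⟨P (f - g), ?_, ?_, ?_⟩
  · intro hQ0
    obtain ⟨s, hs⟩ := Function.ne_iff.1 (sub_ne_zero.2 hfg)
    have := hcoeff (f - g) s.1.1 s.1.2
    rw [hQ0] at this
    simp only [Polynomial.coeff_zero] at this
    rw [dif_pos (by simpa using s.2)] at this
    apply hs
    have hse : (⟨(s.1.1, s.1.2), by simpa using s.2⟩ : {s // s ∈ S}) = s :=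
      Subtype.ext (by simp)
    rw [hse] at this
    exact this.symm
  · intro i j hne
    by_contra hij
    rw [hcoeff, dif_neg hij] at hne
    exact hne rfl
  · intro l a b hab
    have hmem := hTmem a b hab
    have := congrFun heq (l, ⟨(a, b), hmem⟩)
    rw [hφdef] at this
    simp only at this
    rw [hPsub, bivShift_sub]
    simp only [Polynomial.coeff_sub]
    rw [this]
    ring
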